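/- Let V be a doubly stochastic quadratic operator on the simplex S^{m-1} with coefficients p_{ij,k}. Then for every k = 1,...,m one has ∑_{i,j=1}^m p_{ij,k} = m. -/

import Mathlib

/-- Sum of the `k` largest entries of `x`, as a supremum over `k`-element subsets. -/
noncomputable def maxSum (m : ℕ) (x : Fin m → ℝ) (k : ℕ) : ℝ :=
  sSup {r : ℝ | ∃ s : Finset (Fin m), s.card = k ∧ r = ∑ i ∈ s, x i}

/-- `x ≺ y` : `x` is majorized by `y`. -/
def IsMajorizedBy (m : ℕ) (x y : Fin m → ℝ) : Prop :=
  ∀ k : ℕ, 1 ≤ k → k ≤ m - 1 → maxSum m x k ≤ maxSum m y k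

/-- Conditions on the coefficients of a quadratic stochastic operator. -/
def QSOCoeffs (m : ℕ) (p : Fin m → Fin m → Fin m → ℝ) : Prop :=
  (∀ i j k, p i j k = p j i k) ∧ (∀ i j k, 0 ≤ p i j k) ∧ (∀ i j, ∑ k, p i j k = 1)

/-- The quadratic map determined by the coefficients. -/
def QSOMap (m : ℕ) (p : Fin m → Fin m → Fin m → ℝ) (x : Fin m → ℝ) : Fin m → ℝ :=
  fun k => ∑ i, ∑ j, p i j k * x i * x j

/-- A doubly stochastic quadratic operator: `V x ≺ x` for all `x` in the simplex. -/
def IsDSQO (m : ℕ) (p : Fin m → Fin m → Fin m → ℝ) : Prop :=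
  QSOCoeffs m p ∧ ∀ x ∈ stdSimplex ℝ (Fin m), IsMajorizedBy m (QSOMap m p x) x

lemma le_maxSum_one (m : ℕ) (y : Fin m → ℝ) (k : Fin m) : y k ≤ maxSum m y 1 := by
  apply le_csSup
  · refine ⟨∑ i, |y i|, ?_⟩
    rintro r ⟨s, hs, rfl⟩
    obtain ⟨i, rfl⟩ := Finset.card_eq_one.mp hs
    simp only [Finset.sum_singleton]
    calc y i ≤ |y i| := le_abs_self _
      _ ≤ ∑ i, |y i| := Finset.single_le_sum (fun j _ => abs_nonneg (y j)) (Finset.mem_univ i)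
  · exact ⟨{k}, by simp⟩

lemma maxSum_const_one (m : ℕ) (hm : 0 < m) (a : ℝ) :
    maxSum m (fun _ => a) 1 = a := by
  have hset : {r : ℝ | ∃ s : Finset (Fin m), s.card = 1 ∧ r = ∑ _i ∈ s, a} = {a} := by
    ext r
    constructor
    · rintro ⟨s, hs, rfl⟩
      obtain ⟨i, rfl⟩ := Finset.card_eq_one.mp hs
      simp
    · rintro rfl
      exact ⟨{⟨0, hm⟩}, by simp⟩
  unfold maxSum
  rw [hset, csSup_singleton]

/-- For a doubly stochastic quadratic operator, the total sum of the coefficients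
of each component equals `m`. -/
theorem dsqo_sum_eq (m : ℕ) (p : Fin m → Fin m → Fin m → ℝ) (h : IsDSQO m p) :
    ∀ k : Fin m, ∑ i, ∑ j, p i j k = (m : ℝ) := by
  intro k
  obtain ⟨⟨_hsym, hnn, hsum1⟩, hmaj⟩ := h
  rcases Nat.lt_or_ge m 2 with hm | hm
  · -- m = 0 or m = 1
    interval_cases m
    · exact k.elim0
    · have h00 := hsum1 0 0
      simp [Fin.sum_univ_one] at h00 ⊢
      have hk : k = 0 := Subsingleton.elim _ _
      rw [hk]; exact h00
  · have hMpos : (0:ℝ) < (m:ℝ) := by positivity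
    have hMne : (m:ℝ) ≠ 0 := ne_of_gt hMpos
    set c : Fin m → ℝ := fun _ => (m:ℝ)⁻¹ with hc
    have hcs : c ∈ stdSimplex ℝ (Fin m) := by
      constructor
      · intro i; positivity
      · simp only [hc, Finset.sum_const, Finset.card_univ, Fintype.card_fin, nsmul_eq_mul]
        field_simp
    set y : Fin m → ℝ := QSOMap m p c with hy
    have hsumy : ∑ l, y l = 1 := by
      have hstep : ∑ l, y l = ∑ i, ∑ j, (∑ l, p i j l) * (c i * c j) := by
        rw [hy]
        unfold QSOMap
        rw [Finset.sum_comm]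
        refine Finset.sum_congr rfl fun i _ => ?_
        rw [Finset.sum_comm]
        refine Finset.sum_congr rfl fun j _ => ?_
        rw [Finset.sum_mul]
        exact Finset.sum_congr rfl fun l _ => by ring
      rw [hstep]
      simp only [hsum1, one_mul]
      rw [← Finset.sum_mul_sum]
      rw [hcs.2]; ring
    have hle : ∀ l : Fin m, y l ≤ (m:ℝ)⁻¹ := by
      intro l
      have h1 := hmaj c hcs 1 le_rfl (by omega)
      have h2 := le_maxSum_one m y l
      have h3 : maxSum m c 1 = (m:ℝ)⁻¹ := maxSum_const_one m (by omega) _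
      calc y l ≤ maxSum m y 1 := h2
        _ ≤ maxSum m c 1 := h1
        _ = (m:ℝ)⁻¹ := h3
    have heq : ∀ l : Fin m, y l = (m:ℝ)⁻¹ := by
      by_contra hcon
      push_neg at hcon
      obtain ⟨l0, hl0⟩ := hcon
      have hlt : y l0 < (m:ℝ)⁻¹ := lt_of_le_of_ne (hle l0) hl0
      have hstrict : ∑ l, y l < ∑ _l : Fin m, (m:ℝ)⁻¹ :=
        Finset.sum_lt_sum (fun l _ => hle l) ⟨l0, Finset.mem_univ l0, hlt⟩
      rw [hsumy] at hstrict
      simp only [Finset.sum_const, Finset.card_univ, Fintype.card_fin, nsmul_eq_mul] at hstrict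
      rw [mul_inv_cancel₀ hMne] at hstrict
      exact lt_irrefl 1 hstrict
    have hk := heq k
    have hyk : y k = (∑ i, ∑ j, p i j k) * ((m:ℝ)⁻¹ * (m:ℝ)⁻¹) := by
      rw [hy]
      unfold QSOMap
      rw [Finset.sum_mul]
      refine Finset.sum_congr rfl fun i _ => ?_
      rw [Finset.sum_mul]
      refine Finset.sum_congr rfl fun j _ => ?_
      simp only [hc]; ring
    rw [hyk] at hk
    field_simp at hk
    exact hk
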